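/- Let X ⊆ ℝ^d be a nonempty closed convex set, f : ℝ^d → ℝ convex on X, and x̂ ∈ X. Let h₁, …, h_N > 0 and h_{N+1} > 0, and let the projected subgradient iterates be x^{k+1} = P_X(x^k − h_k·g^k) for k = 1, …, N, starting at x¹ ∈ X, where g^k is a subgradient of f at x^k; let g^{N+1} also be a subgradient of f at x^{N+1}. Let 0 ≤ v₀ ≤ v₁ ≤ … ≤ v_N ≤ v_{N+1} be real numbers, and define c_k = h_k·v_k² − (v_k − v_{k−1})·∑_{i=k}^{N+1} h_i·v_i for k = 1, …, N+1. Then ∑_{k=1}^{N+1} c_k·(f(x^k) − f(x̂)) ≤ (v₀²/2)·‖x¹ − x̂‖² + (1/2)·∑_{k=1}^{N+1} h_k²·v_k²·‖g^k‖². -/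

import Mathlib

open Finset

local notation "⟪" a ", " b "⟫" => @inner ℝ _ _ a b

lemma proj_closer {d : ℕ} {X : Set (EuclideanSpace ℝ (Fin d))} (hXconv : Convex ℝ X)
    {z c p : EuclideanSpace ℝ (Fin d)} (hc : c ∈ X) (hp : p ∈ X)
    (hmin : ∀ y ∈ X, ‖c - z‖ ≤ ‖y - z‖) : ‖c - p‖ ≤ ‖z - p‖ := by
  have key : ∀ t : ℝ, 0 < t → t ≤ 1 → ⟪z - c, p - c⟫ ≤ t / 2 * ‖p - c‖ ^ 2 := by
    intro t ht0 ht1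
    have hyX : (1 - t) • c + t • p ∈ X :=
      hXconv hc hp (by linarith) (le_of_lt ht0) (by ring)
    have h1 : ‖c - z‖ ≤ ‖(1 - t) • c + t • p - z‖ := hmin _ hyX
    have hrw : (1 - t) • c + t • p - z = (c - z) + t • (p - c) := by
      rw [sub_smul, one_smul, smul_sub]; abel
    have h2 : ‖c - z‖ ^ 2 ≤ ‖(c - z) + t • (p - c)‖ ^ 2 := by
      rw [← hrw]; exact pow_le_pow_left₀ (norm_nonneg _) h1 2
    have h3 : ‖(c - z) + t • (p - c)‖ ^ 2
        = ‖c - z‖ ^ 2 + 2 * (t * ⟪c - z, p - c⟫) + t ^ 2 * ‖p - c‖ ^ 2 := by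
      rw [@norm_add_sq_real, real_inner_smul_right, norm_smul]
      simp [Real.norm_eq_abs, mul_pow, sq_abs]
    have h4 : ⟪z - c, p - c⟫ = - ⟪c - z, p - c⟫ := by
      rw [← neg_sub c z, inner_neg_left]
    rw [h4]
    nlinarith [sq_nonneg t]
  have hin : ⟪z - c, p - c⟫ ≤ 0 := by
    by_contra hcon
    push_neg at hcon
    set a := ⟪z - c, p - c⟫ with ha
    have hpc : 0 < ‖p - c‖ ^ 2 := by
      rcases eq_or_lt_of_le (norm_nonneg (p - c)) with hh | hh
      · exfalso
        have : p - c = 0 := by rwa [eq_comm, norm_eq_zero] at hh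
        rw [ha, this, inner_zero_right] at hcon; exact lt_irrefl 0 hcon
      · positivity
    have ht := key (min 1 (a / ‖p - c‖ ^ 2)) (lt_min one_pos (by positivity)) (min_le_left _ _)
    have h5 : min 1 (a / ‖p - c‖ ^ 2) ≤ a / ‖p - c‖ ^ 2 := min_le_right _ _
    have h6 : a ≤ (a / ‖p - c‖ ^ 2) / 2 * ‖p - c‖ ^ 2 := by
      calc a ≤ min 1 (a / ‖p - c‖ ^ 2) / 2 * ‖p - c‖ ^ 2 := ht
        _ ≤ (a / ‖p - c‖ ^ 2) / 2 * ‖p - c‖ ^ 2 := by nlinarith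
    rw [div_div, div_mul_eq_mul_div, mul_comm, mul_div_assoc] at h6
    have h7 : ‖p - c‖ ^ 2 * (a / (‖p - c‖ ^ 2 * 2)) = a / 2 := by
      rw [mul_div_assoc', mul_div_mul_left a 2 hpc.ne']
    rw [h7] at h6
    linarith
  have hexp : ‖z - p‖ ^ 2 = ‖z - c‖ ^ 2 - 2 * ⟪z - c, p - c⟫ + ‖p - c‖ ^ 2 := by
    have h1 : z - p = (z - c) - (p - c) := by abel
    rw [h1, @norm_sub_sq_real]
  have h2 : ‖c - p‖ ^ 2 ≤ ‖z - p‖ ^ 2 := by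
    rw [norm_sub_rev c p, hexp]
    nlinarith [sq_nonneg ‖z - c‖]
  nlinarith [norm_nonneg (c - p), norm_nonneg (z - p)]

set_option maxHeartbeats 1000000 in
theorem zamani_last_iterate_inequality
    (d N : ℕ) (X : Set (EuclideanSpace ℝ (Fin d)))
    (hXne : X.Nonempty) (hXclosed : IsClosed X) (hXconv : Convex ℝ X)
    (f : EuclideanSpace ℝ (Fin d) → ℝ)
    (hconv : ConvexOn ℝ X f)
    (xhat : EuclideanSpace ℝ (Fin d)) (hxhat : xhat ∈ X)
    (h : ℕ → ℝ) (hpos : ∀ k, 1 ≤ k → k ≤ N + 1 → 0 < h k)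
    (x g : ℕ → EuclideanSpace ℝ (Fin d))
    (hx1X : x 1 ∈ X)
    (hsub : ∀ k, 1 ≤ k → k ≤ N + 1 →
      ∀ y ∈ X, f (x k) + (inner ℝ (g k) (y - x k) : ℝ) ≤ f y)
    (hupd : ∀ k, 1 ≤ k → k ≤ N →
      x (k + 1) ∈ X ∧
      ∀ y ∈ X,
        ‖x (k + 1) - (x k - h k • g k)‖ ≤ ‖y - (x k - h k • g k)‖)
    (v : ℕ → ℝ) (hv0 : 0 ≤ v 0) (hvmono : ∀ k, k ≤ N → v k ≤ v (k + 1)) :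
    ∑ k ∈ Icc 1 (N + 1),
        (h k * (v k) ^ 2 - (v k - v (k - 1)) * ∑ i ∈ Icc k (N + 1), h i * v i) *
          (f (x k) - f xhat) ≤
      (v 0) ^ 2 / 2 * ‖x 1 - xhat‖ ^ 2 +
        1 / 2 * ∑ k ∈ Icc 1 (N + 1), (h k) ^ 2 * (v k) ^ 2 * ‖g k‖ ^ 2 := by
  classical
  -- basic facts
  have xinX : ∀ k, 1 ≤ k → k ≤ N + 1 → x k ∈ X := by
    intro k
    induction k with
    | zero => intro h1 _; omega
    | succ n ih =>
      intro _ h2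
      rcases Nat.eq_zero_or_pos n with rfl | hn
      · exact hx1X
      · exact (hupd n hn (by omega)).1
  have vmono : ∀ j k, j ≤ k → k ≤ N + 1 → v j ≤ v k := by
    intro j k
    induction k with
    | zero =>
      intro hjk _
      have hj : j = 0 := by omega
      rw [hj]
    | succ n ih =>
      intro hjk hk
      rcases Nat.eq_or_lt_of_le hjk with heq | hlt
      · rw [heq]
      · exact le_trans (ih (by omega) (by omega)) (hvmono n (by omega))
  have vnn : ∀ k, k ≤ N + 1 → 0 ≤ v k := fun k hk =>
    le_trans hv0 (vmono 0 k (Nat.zero_le k) hk)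
  have hΔ : ∀ k, 1 ≤ k → k ≤ N + 1 → v (k - 1) ≤ v k := by
    intro k hk1 hk2
    have h1 := hvmono (k - 1) (by omega)
    rwa [Nat.sub_add_cancel hk1] at h1
  -- the auxiliary sequence
  set w : ℕ → EuclideanSpace ℝ (Fin d) :=
    fun i => v 0 • xhat + ∑ j ∈ range i, (v (j + 1) - v j) • x (j + 1) with hwdef
  have hw0 : w 0 = v 0 • xhat := by simp [hwdef]
  have hwrec : ∀ i, w (i + 1) = w i + (v (i + 1) - v i) • x (i + 1) := by
    intro i
    simp only [hwdef]
    rw [Finset.sum_range_succ]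
    abel
  have hshift : ∀ i, v (i + 1) • x (i + 1) - w (i + 1) = v i • x (i + 1) - w i := by
    intro i
    rw [hwrec i, sub_smul]
    abel
  have hwmem : ∀ i, i ≤ N + 1 → ∃ y ∈ X, w i = v i • y := by
    intro i
    induction i with
    | zero => intro _; exact ⟨xhat, hxhat, hw0⟩
    | succ n ih =>
      intro hn
      obtain ⟨y, hyX, hyw⟩ := ih (by omega)
      by_cases hv : v (n + 1) = 0
      · have hvn : v n = 0 :=
          le_antisymm (by rw [← hv]; exact hvmono n (by omega)) (vnn n (by omega))
        exact ⟨y, hyX, by rw [hwrec n, hyw, hvn, hv]; simp⟩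
      · have hvpos : 0 < v (n + 1) := lt_of_le_of_ne (vnn (n + 1) hn) (Ne.symm hv)
        have hvn_le : v n ≤ v (n + 1) := hvmono n (by omega)
        have e1 : v (n + 1) * (v n / v (n + 1)) = v n := by field_simp
        have e2 : v (n + 1) * ((v (n + 1) - v n) / v (n + 1)) = v (n + 1) - v n := by
          field_simp
        refine ⟨(v n / v (n + 1)) • y + ((v (n + 1) - v n) / v (n + 1)) • x (n + 1),
          hXconv hyX (xinX (n + 1) (by omega) hn)
            (div_nonneg (vnn n (by omega)) hvpos.le)
            (div_nonneg (by linarith) hvpos.le) (by field_simp; ring), ?_⟩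
        rw [hwrec n, hyw, smul_add, smul_smul, smul_smul, e1, e2]
  -- key per-step inequality
  have keystep : ∀ i, 1 ≤ i → i ≤ N →
      h i * v i * ⟪g i, v i • x i - w i⟫ ≤
        ‖v i • x i - w i‖ ^ 2 / 2 - ‖v i • x (i + 1) - w i‖ ^ 2 / 2
          + (h i) ^ 2 * (v i) ^ 2 / 2 * ‖g i‖ ^ 2 := by
    intro i hi1 hi2
    obtain ⟨y, hyX, hyw⟩ := hwmem i (by omega)
    rcases eq_or_lt_of_le (vnn i (by omega)) with hvz | hvpos
    · rw [hyw, ← hvz]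
      simp
    · have hx1' : x (i + 1) ∈ X := (hupd i hi1 hi2).1
      have hproj : ‖x (i + 1) - y‖ ≤ ‖(x i - h i • g i) - y‖ :=
        proj_closer hXconv hx1' hyX ((hupd i hi1 hi2).2)
      have hsq : ‖x (i + 1) - y‖ ^ 2 ≤ ‖(x i - h i • g i) - y‖ ^ 2 :=
        pow_le_pow_left₀ (norm_nonneg _) hproj 2
      have hexp : ‖(x i - h i • g i) - y‖ ^ 2
          = ‖x i - y‖ ^ 2 - 2 * (h i * ⟪g i, x i - y⟫) + (h i) ^ 2 * ‖g i‖ ^ 2 := by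
        have e : (x i - h i • g i) - y = (x i - y) - h i • g i := by abel
        rw [e, @norm_sub_sq_real, real_inner_smul_right,
          real_inner_comm (x i - y) (g i), norm_smul]
        simp [Real.norm_eq_abs, mul_pow, sq_abs]
      have H := hsq.trans_eq hexp
      rw [hyw, ← smul_sub, ← smul_sub, real_inner_smul_right, norm_smul, norm_smul]
      simp only [Real.norm_eq_abs, mul_pow, sq_abs]
      nlinarith [mul_le_mul_of_nonneg_left H (sq_nonneg (v i))]
  -- last step (Cauchy–Schwarz / Young)
  have laststep : h (N + 1) * v (N + 1) * ⟪g (N + 1), v N • x (N + 1) - w N⟫ ≤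
      ‖v N • x (N + 1) - w N‖ ^ 2 / 2
        + (h (N + 1)) ^ 2 * (v (N + 1)) ^ 2 / 2 * ‖g (N + 1)‖ ^ 2 := by
    have h0 : (0 : ℝ) ≤
        ‖(h (N + 1) * v (N + 1)) • g (N + 1) - (v N • x (N + 1) - w N)‖ ^ 2 :=
      sq_nonneg _
    rw [@norm_sub_sq_real, real_inner_smul_left, norm_smul] at h0
    simp only [Real.norm_eq_abs, mul_pow, sq_abs] at h0
    nlinarith [h0]
  -- sum conversion helper
  have convsum : ∀ (F : ℕ → ℝ) (n : ℕ), ∑ k ∈ Icc 1 n, F k = ∑ j ∈ range n, F (j + 1) := by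
    intro F n
    rw [← Finset.Ico_add_one_right_eq_Icc, Finset.sum_Ico_eq_sum_range]
    simp [add_comm]
  -- Part A: telescoping bound on ∑ h v ⟪g, v x - w⟫
  have mainA : ∑ i ∈ Icc 1 (N + 1), h i * v i * ⟪g i, v i • x i - w i⟫ ≤
      (v 0) ^ 2 / 2 * ‖x 1 - xhat‖ ^ 2
        + ∑ i ∈ Icc 1 (N + 1), (h i) ^ 2 * (v i) ^ 2 / 2 * ‖g i‖ ^ 2 := by
    rw [convsum _ (N + 1), convsum _ (N + 1), Finset.sum_range_succ, Finset.sum_range_succ]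
    have step1 : ∀ j ∈ range N,
        h (j + 1) * v (j + 1) * ⟪g (j + 1), v (j + 1) • x (j + 1) - w (j + 1)⟫ ≤
          (‖v j • x (j + 1) - w j‖ ^ 2 / 2 - ‖v (j + 1) • x (j + 1 + 1) - w (j + 1)‖ ^ 2 / 2)
            + (h (j + 1)) ^ 2 * (v (j + 1)) ^ 2 / 2 * ‖g (j + 1)‖ ^ 2 := by
      intro j hj
      rw [Finset.mem_range] at hj
      have hk := keystep (j + 1) (by omega) (by omega)
      have hnorm : ‖v (j + 1) • x (j + 1) - w (j + 1)‖ = ‖v j • x (j + 1) - w j‖ := by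
        rw [hshift j]
      rw [hnorm] at hk
      linarith [hk]
    have tele := Finset.sum_range_sub' (fun j => ‖v j • x (j + 1) - w j‖ ^ 2 / 2) N
    beta_reduce at tele
    have hD0 : ‖v 0 • x 1 - w 0‖ ^ 2 / 2 = (v 0) ^ 2 / 2 * ‖x 1 - xhat‖ ^ 2 := by
      rw [hw0, ← smul_sub, norm_smul]
      simp [Real.norm_eq_abs, mul_pow, sq_abs]
      ring
    have hlast : h (N + 1) * v (N + 1) * ⟪g (N + 1), v (N + 1) • x (N + 1) - w (N + 1)⟫ ≤
        ‖v N • x (N + 1) - w N‖ ^ 2 / 2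
          + (h (N + 1)) ^ 2 * (v (N + 1)) ^ 2 / 2 * ‖g (N + 1)‖ ^ 2 := by
      have hin : ⟪g (N + 1), v (N + 1) • x (N + 1) - w (N + 1)⟫
          = ⟪g (N + 1), v N • x (N + 1) - w N⟫ := by rw [hshift N]
      rw [hin]
      exact laststep
    have hsum1 : ∑ j ∈ range N,
        h (j + 1) * v (j + 1) * ⟪g (j + 1), v (j + 1) • x (j + 1) - w (j + 1)⟫ ≤
        ∑ j ∈ range N,
          ((‖v j • x (j + 1) - w j‖ ^ 2 / 2 - ‖v (j + 1) • x (j + 1 + 1) - w (j + 1)‖ ^ 2 / 2)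
            + (h (j + 1)) ^ 2 * (v (j + 1)) ^ 2 / 2 * ‖g (j + 1)‖ ^ 2) :=
      Finset.sum_le_sum step1
    rw [Finset.sum_add_distrib, tele] at hsum1
    linarith [hsum1, hlast, hD0.symm.le, hD0.le]
  -- index/telescoping facts for part B
  have inner_tel : ∀ i : ℕ, ∑ k ∈ Icc 1 i, (v k - v (k - 1)) = v i - v 0 := by
    intro i
    rw [convsum (fun k => v k - v (k - 1)) i]
    simp only [Nat.add_sub_cancel]
    exact Finset.sum_range_sub v i
  have hicc_range : ∀ i : ℕ,
      ∑ k ∈ Icc 1 i, (v k - v (k - 1)) • x k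
        = ∑ j ∈ range i, (v (j + 1) - v j) • x (j + 1) := by
    intro i
    rw [← Finset.Ico_add_one_right_eq_Icc, Finset.sum_Ico_eq_sum_range]
    simp [add_comm]
  have vecid : ∀ i : ℕ, v i • x i - w i
      = v 0 • (x i - xhat)
        + ((v i - v 0) • x i - ∑ k ∈ Icc 1 i, (v k - v (k - 1)) • x k) := by
    intro i
    rw [hicc_range i]
    simp only [hwdef]
    module
  -- the double-sum swap
  have swap : ∑ i ∈ Icc 1 (N + 1), ∑ k ∈ Icc 1 i,
        (h i * v i) * ((v k - v (k - 1)) * (f (x k) - f xhat))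
      = ∑ k ∈ Icc 1 (N + 1),
        (v k - v (k - 1)) * (∑ i ∈ Icc k (N + 1), h i * v i) * (f (x k) - f xhat) := by
    rw [Finset.sum_comm' (s := Icc 1 (N + 1)) (t := fun i => Icc 1 i)
      (t' := Icc 1 (N + 1)) (s' := fun k => Icc k (N + 1))
      (by intro i k; simp only [Finset.mem_Icc]; omega)]
    refine Finset.sum_congr rfl fun k hk => ?_
    rw [Finset.mul_sum, Finset.sum_mul]
    exact Finset.sum_congr rfl fun i _ => by ring
  -- Part B algebraic identity
  have algid : (∑ k ∈ Icc 1 (N + 1),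
        (h k * (v k) ^ 2 - (v k - v (k - 1)) * ∑ i ∈ Icc k (N + 1), h i * v i) *
          (f (x k) - f xhat))
      = ∑ i ∈ Icc 1 (N + 1), (h i * v i * (v 0 * (f (x i) - f xhat))
          + ∑ k ∈ Icc 1 i,
              (h i * v i) * ((v k - v (k - 1)) * ((f (x i) - f xhat) - (f (x k) - f xhat)))) := by
    have expand : ∀ i ∈ Icc 1 (N + 1),
        h i * v i * (v 0 * (f (x i) - f xhat))
          + ∑ k ∈ Icc 1 i,
              (h i * v i) * ((v k - v (k - 1)) * ((f (x i) - f xhat) - (f (x k) - f xhat)))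
        = h i * (v i) ^ 2 * (f (x i) - f xhat)
          - ∑ k ∈ Icc 1 i, (h i * v i) * ((v k - v (k - 1)) * (f (x k) - f xhat)) := by
      intro i hi
      have e1 : ∑ k ∈ Icc 1 i,
            (h i * v i) * ((v k - v (k - 1)) * ((f (x i) - f xhat) - (f (x k) - f xhat)))
          = (h i * v i * (f (x i) - f xhat)) * (∑ k ∈ Icc 1 i, (v k - v (k - 1)))
            - ∑ k ∈ Icc 1 i, (h i * v i) * ((v k - v (k - 1)) * (f (x k) - f xhat)) := by
        rw [Finset.mul_sum, ← Finset.sum_sub_distrib]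
        exact Finset.sum_congr rfl fun k hk => by ring
      rw [e1, inner_tel i]
      ring
    rw [Finset.sum_congr rfl expand, Finset.sum_sub_distrib, swap, ← Finset.sum_sub_distrib]
    refine Finset.sum_congr rfl fun k hk => ?_
    ring
  -- Part B: per-index bound by the inner-product term
  have Rle : ∀ i ∈ Icc 1 (N + 1),
      h i * v i * (v 0 * (f (x i) - f xhat))
        + ∑ k ∈ Icc 1 i,
            (h i * v i) * ((v k - v (k - 1)) * ((f (x i) - f xhat) - (f (x k) - f xhat)))
      ≤ h i * v i * ⟪g i, v i • x i - w i⟫ := by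
    intro i hi
    rw [Finset.mem_Icc] at hi
    have hgi := hsub i hi.1 hi.2
    have hhv : (0 : ℝ) ≤ h i * v i :=
      mul_nonneg (hpos i hi.1 hi.2).le (vnn i hi.2)
    have hinner : ⟪g i, v i • x i - w i⟫
        = v 0 * ⟪g i, x i - xhat⟫
          + ∑ k ∈ Icc 1 i, (v k - v (k - 1)) * ⟪g i, x i - x k⟫ := by
      rw [vecid i, inner_add_right, inner_sub_right, real_inner_smul_right,
        real_inner_smul_right, inner_sum]
      have e2 : ∑ k ∈ Icc 1 i, ⟪g i, (v k - v (k - 1)) • x k⟫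
          = ∑ k ∈ Icc 1 i, (v k - v (k - 1)) * ⟪g i, x k⟫ :=
        Finset.sum_congr rfl fun k hk => real_inner_smul_right _ _ _
      have e3 : ∑ k ∈ Icc 1 i, (v k - v (k - 1)) * ⟪g i, x i - x k⟫
          = (∑ k ∈ Icc 1 i, (v k - v (k - 1))) * ⟪g i, x i⟫
            - ∑ k ∈ Icc 1 i, (v k - v (k - 1)) * ⟪g i, x k⟫ := by
        rw [Finset.sum_mul, ← Finset.sum_sub_distrib]
        refine Finset.sum_congr rfl fun k hk => ?_
        rw [inner_sub_right]
        ring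
      rw [e2, e3, inner_tel i]
      try ring
    rw [hinner, mul_add, Finset.mul_sum]
    refine add_le_add ?_ (Finset.sum_le_sum fun k hk => ?_)
    · have f1 : f (x i) - f xhat ≤ ⟪g i, x i - xhat⟫ := by
        have hh := hgi xhat hxhat
        have hneg : ⟪g i, x i - xhat⟫ = - ⟪g i, xhat - x i⟫ := by
          rw [← inner_neg_right, neg_sub]
        rw [hneg]
        linarith
      nlinarith [mul_le_mul_of_nonneg_left f1 (mul_nonneg hhv hv0)]
    · rw [Finset.mem_Icc] at hk
      have hΔk : (0 : ℝ) ≤ v k - v (k - 1) := by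
        have := hΔ k hk.1 (by omega)
        linarith
      have f2 : (f (x i) - f xhat) - (f (x k) - f xhat) ≤ ⟪g i, x i - x k⟫ := by
        have hh := hgi (x k) (xinX k hk.1 (by omega))
        have hneg : ⟪g i, x i - x k⟫ = - ⟪g i, x k - x i⟫ := by
          rw [← inner_neg_right, neg_sub]
        rw [hneg]
        linarith
      nlinarith [mul_le_mul_of_nonneg_left f2 (mul_nonneg hhv hΔk)]
  -- conclusion
  have final : ∑ i ∈ Icc 1 (N + 1), (h i) ^ 2 * (v i) ^ 2 / 2 * ‖g i‖ ^ 2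
      = 1 / 2 * ∑ k ∈ Icc 1 (N + 1), (h k) ^ 2 * (v k) ^ 2 * ‖g k‖ ^ 2 := by
    rw [Finset.mul_sum]
    exact Finset.sum_congr rfl fun k _ => by ring
  calc ∑ k ∈ Icc 1 (N + 1),
        (h k * (v k) ^ 2 - (v k - v (k - 1)) * ∑ i ∈ Icc k (N + 1), h i * v i) *
          (f (x k) - f xhat)
      = ∑ i ∈ Icc 1 (N + 1), (h i * v i * (v 0 * (f (x i) - f xhat))
          + ∑ k ∈ Icc 1 i,
              (h i * v i) * ((v k - v (k - 1)) * ((f (x i) - f xhat) - (f (x k) - f xhat)))) :=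
        algid
    _ ≤ ∑ i ∈ Icc 1 (N + 1), h i * v i * ⟪g i, v i • x i - w i⟫ :=
        Finset.sum_le_sum Rle
    _ ≤ (v 0) ^ 2 / 2 * ‖x 1 - xhat‖ ^ 2
          + ∑ i ∈ Icc 1 (N + 1), (h i) ^ 2 * (v i) ^ 2 / 2 * ‖g i‖ ^ 2 := mainA
    _ = (v 0) ^ 2 / 2 * ‖x 1 - xhat‖ ^ 2
          + 1 / 2 * ∑ k ∈ Icc 1 (N + 1), (h k) ^ 2 * (v k) ^ 2 * ‖g k‖ ^ 2 := by
        rw [final]
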